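/- Monotone decay of the discrete energy along trajectories of the second-order IEQ-DG scheme (Theorem 3.2, trajectory form): let Δt > 0, let P : H → V be the orthogonal projection onto V, and for each n ∈ ℕ let Tₙ : H → H be a self-adjoint bounded linear operator. Let (uₙ) and (qₙ) be sequences in V and (Uₙ) a sequence in H such that for every n ∈ ℕ: U_{n+1} = P Uₙ + (1/2) Tₙ (u_{n+1} − uₙ), and for all φ, ψ ∈ V: ⟨(u_{n+1} − uₙ)/Δt, φ⟩ + b((uₙ + u_{n+1})/2, φ) = −A(φ, (qₙ + q_{n+1})/2) − (1/2)⟨Tₙ (U_{n+1} + P Uₙ), φ⟩ and ⟨qₙ, ψ⟩ = A(uₙ, ψ). Then for every n ∈ ℕ: E(u_{n+1}, q_{n+1}, P U_{n+1}) ≤ E(uₙ, qₙ, P Uₙ) − (1/Δt)‖u_{n+1} − uₙ‖²; in particular the sequence of discrete energies Eⁿ := E(uₙ, qₙ, P Uₙ) is nonincreasing in n, for any time step Δt > 0. -/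

import Mathlib

/-- Monotone decay of the discrete energy along trajectories of the second-order
IEQ-DG scheme (Theorem 3.2, trajectory form). -/
theorem stmt_11
    {H : Type*} [NormedAddCommGroup H] [InnerProductSpace ℝ H] [CompleteSpace H]
    (V : Submodule ℝ H) [FiniteDimensional ℝ V]
    (A : V →ₗ[ℝ] V →ₗ[ℝ] ℝ)
    (b : V →ₗ[ℝ] V →ₗ[ℝ] ℝ)
    (hb_symm : ∀ x y : V, b x y = b y x)
    (hb_pos : ∀ x : V, 0 ≤ b x x)
    (E : V → V → H → ℝ)
    (hE : ∀ (u q : V) (U : H), E u q U = (1/2) * ‖(q : H)‖^2 + ‖U‖^2 + (1/2) * b u u)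
    (Δt : ℝ) (hΔt : 0 < Δt)
    (T : ℕ → H →L[ℝ] H)
    (hT : ∀ n : ℕ, ∀ x y : H, (inner ℝ (T n x) y : ℝ) = (inner ℝ x (T n y) : ℝ))
    (u q : ℕ → V) (U : ℕ → H)
    (hU : ∀ n : ℕ,
      U (n+1) = ((V.orthogonalProjectionOnto (U n) : V) : H)
        + (1/2 : ℝ) • T n ((u (n+1) : H) - (u n : H)))
    (heq1 : ∀ n : ℕ, ∀ φ : V,
      (inner ℝ ((1/Δt) • ((u (n+1) : H) - (u n : H))) (φ : H) : ℝ)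
          + b ((1/2 : ℝ) • (u n + u (n+1))) φ
        = -A φ ((1/2 : ℝ) • (q n + q (n+1)))
          - (1/2) * (inner ℝ (T n (U (n+1) + ((V.orthogonalProjectionOnto (U n) : V) : H)))
              (φ : H) : ℝ))
    (heq2 : ∀ n : ℕ, ∀ ψ : V, (inner ℝ (q n : H) (ψ : H) : ℝ) = A (u n) ψ) :
    (∀ n : ℕ,
      E (u (n+1)) (q (n+1)) ((V.orthogonalProjectionOnto (U (n+1)) : V) : H)
        ≤ E (u n) (q n) ((V.orthogonalProjectionOnto (U n) : V) : H)
          - (1/Δt) * ‖(u (n+1) : H) - (u n : H)‖^2)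
    ∧ Antitone (fun n : ℕ =>
        E (u n) (q n) ((V.orthogonalProjectionOnto (U n) : V) : H)) := by
  have hproj : ∀ x : H, ‖((V.orthogonalProjectionOnto x : V) : H)‖ ≤ ‖x‖ := by
    intro x
    have h1 : ‖V.orthogonalProjectionOnto x‖ ≤ ‖V.orthogonalProjectionOnto‖ * ‖x‖ :=
      (V.orthogonalProjectionOnto).le_opNorm x
    have h2 : ‖V.orthogonalProjectionOnto‖ ≤ 1 := Submodule.orthogonalProjectionOnto_norm_le V
    have : ‖((V.orthogonalProjectionOnto x : V) : H)‖ = ‖V.orthogonalProjectionOnto x‖ := rfl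
    nlinarith [norm_nonneg x]
  have key : ∀ n : ℕ,
      (1/Δt) * ‖(u (n+1) : H) - (u n : H)‖^2
        + (1/2) * (b (u (n+1)) (u (n+1)) - b (u n) (u n))
        + (1/2) * (‖(q (n+1) : H)‖^2 - ‖(q n : H)‖^2)
        + (‖U (n+1)‖^2 - ‖((V.orthogonalProjectionOnto (U n) : V) : H)‖^2) = 0 := by
    intro n
    set Pn : H := ((V.orthogonalProjectionOnto (U n) : V) : H) with hPn
    set δ : V := u (n+1) - u n with hδdef
    have hδ : (u (n+1) : H) - (u n : H) = (δ : H) := by simp [hδdef]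
    have h1 := heq1 n δ
    -- first term
    have hfirst : (inner ℝ ((1/Δt) • ((u (n+1) : H) - (u n : H))) (δ : H) : ℝ)
        = (1/Δt) * ‖(u (n+1) : H) - (u n : H)‖^2 := by
      rw [real_inner_smul_left, hδ, real_inner_self_eq_norm_sq]
    -- b term
    have hbterm : b ((1/2 : ℝ) • (u n + u (n+1))) δ
        = (1/2) * (b (u (n+1)) (u (n+1)) - b (u n) (u n)) := by
      have hs := hb_symm (u n) (u (n+1))
      simp only [hδdef, map_smul, map_add, map_sub, LinearMap.smul_apply,
        LinearMap.add_apply, LinearMap.sub_apply, smul_eq_mul]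
      rw [hs]; ring
    -- A term
    have hA : ∀ ψ : V, A δ ψ = (inner ℝ ((q (n+1) : H) - (q n : H)) (ψ : H) : ℝ) := by
      intro ψ
      rw [hδdef, map_sub, LinearMap.sub_apply, ← heq2 (n+1) ψ, ← heq2 n ψ, inner_sub_left]
    have hAterm : A δ ((1/2 : ℝ) • (q n + q (n+1)))
        = (1/2) * (‖(q (n+1) : H)‖^2 - ‖(q n : H)‖^2) := by
      rw [hA]
      have : (((((1:ℝ)/2) • (q n + q (n+1)) : V)) : H)
          = ((1:ℝ)/2) • ((q n : H) + (q (n+1) : H)) := by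
        simp
      rw [this, real_inner_smul_right, inner_sub_left, inner_add_right, inner_add_right,
        real_inner_self_eq_norm_sq, real_inner_self_eq_norm_sq,
        real_inner_comm (q (n+1) : H) (q n : H)]
      ring
    -- T term
    have hTδ : T n ((u (n+1) : H) - (u n : H)) = (2:ℝ) • (U (n+1) - Pn) := by
      have h := hU n
      have : U (n+1) - Pn = (1/2 : ℝ) • T n ((u (n+1) : H) - (u n : H)) := by
        rw [h]; abel
      rw [this, smul_smul]; norm_num
    have hTterm : (inner ℝ (T n (U (n+1) + Pn)) (δ : H) : ℝ)
        = 2 * (‖U (n+1)‖^2 - ‖Pn‖^2) := by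
      rw [hT n, ← hδ, hTδ, real_inner_smul_right, inner_add_left, inner_sub_right,
        inner_sub_right, real_inner_self_eq_norm_sq, real_inner_self_eq_norm_sq,
        real_inner_comm (U (n+1)) Pn]
      ring
    rw [hfirst, hbterm, hAterm, hTterm] at h1
    linarith
  have main : ∀ n : ℕ,
      E (u (n+1)) (q (n+1)) ((V.orthogonalProjectionOnto (U (n+1)) : V) : H)
        ≤ E (u n) (q n) ((V.orthogonalProjectionOnto (U n) : V) : H)
          - (1/Δt) * ‖(u (n+1) : H) - (u n : H)‖^2 := by
    intro n
    rw [hE, hE]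
    have hk := key n
    have hp := hproj (U (n+1))
    have hp2 : ‖((V.orthogonalProjectionOnto (U (n+1)) : V) : H)‖^2 ≤ ‖U (n+1)‖^2 := by
      have := norm_nonneg ((V.orthogonalProjectionOnto (U (n+1)) : V) : H)
      nlinarith
    linarith
  refine ⟨main, antitone_nat_of_succ_le fun n => ?_⟩
  have := main n
  have hnn : 0 ≤ (1/Δt) * ‖(u (n+1) : H) - (u n : H)‖^2 := by positivity
  exact le_trans this (by linarith)
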